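/- arXiv:cs/0502075 — 4 statements merged into one kernel-verified Lean document; each statement's English description precedes it below -/
import Mathlib

section
/- Let X ∈ ℝ^n with |x_j| ≤ M for all j, and let k ≥ 1 be real. If Z ∈ ℝ^n is at least as good as the all-zero synopsis, i.e., ‖X − W⁻¹(Z)‖_k ≤ ‖X‖_k, then every coordinate of the reconstruction is bounded: max_j |W⁻¹(Z)_j| ≤ 2·n^{1/k}·M. -/
/-- The non-normalized Haar basis vector `V_i` on `n = 2^m` coordinates:
`V_0 ≡ 1`, and for `i = 2^s + t` (`0 ≤ s < m`, `0 ≤ t < 2^s`), `V_i` is `+1` on the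
left half of the dyadic block `I(s,t) = [t·2^(m-s), (t+1)·2^(m-s))`, `-1` on its right
half, and `0` outside. -/
noncomputable def haarV (m i j : ℕ) : ℝ :=
  if i = 0 then 1
  else
    let s := Nat.log2 i
    let t := i - 2 ^ s
    if t * 2 ^ (m - s) ≤ j ∧ j < t * 2 ^ (m - s) + 2 ^ (m - s - 1) then 1
    else if t * 2 ^ (m - s) + 2 ^ (m - s - 1) ≤ j ∧ j < (t + 1) * 2 ^ (m - s) then -1
    else 0

/-- The inverse wavelet transform `W⁻¹(Z) = ∑_{i<2^m} Z_i · V_i`. -/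
noncomputable def invW (m : ℕ) (Z : ℕ → ℝ) (j : ℕ) : ℝ :=
  ∑ i ∈ Finset.range (2 ^ m), Z i * haarV m i j

/-- The `ℓ_k` norm `‖Y‖_k = (∑_{j<n} |Y_j|^k)^(1/k)` of a vector `Y ∈ ℝ^n`. -/
noncomputable def lpNormK (n : ℕ) (k : ℝ) (Y : ℕ → ℝ) : ℝ :=
  (∑ j ∈ Finset.range n, |Y j| ^ k) ^ (1 / k)

lemma coord_le_lpNormK (n : ℕ) (k : ℝ) (hk : 1 ≤ k) (Y : ℕ → ℝ) {j : ℕ} (hj : j < n) :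
    |Y j| ≤ lpNormK n k Y := by
  have hk0 : (0 : ℝ) < k := lt_of_lt_of_le one_pos hk
  have h1 : |Y j| = (|Y j| ^ k) ^ (1 / k) := by
    rw [← Real.rpow_mul (abs_nonneg _), mul_one_div, div_self (ne_of_gt hk0), Real.rpow_one]
  rw [h1, lpNormK]
  apply Real.rpow_le_rpow (Real.rpow_nonneg (abs_nonneg _) _)
  · exact Finset.single_le_sum (fun i _ => Real.rpow_nonneg (abs_nonneg _) _)
      (Finset.mem_range.mpr hj)
  · positivity

lemma lpNormK_le (n : ℕ) (k : ℝ) (hk : 1 ≤ k) (Y : ℕ → ℝ) (M : ℝ) (hM : 0 ≤ M)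
    (hY : ∀ j < n, |Y j| ≤ M) :
    lpNormK n k Y ≤ ((n : ℝ)) ^ (1 / k) * M := by
  have hk0 : (0 : ℝ) < k := lt_of_lt_of_le one_pos hk
  have hsum : ∑ j ∈ Finset.range n, |Y j| ^ k ≤ (n : ℝ) * M ^ k := by
    calc ∑ j ∈ Finset.range n, |Y j| ^ k ≤ ∑ _j ∈ Finset.range n, M ^ k :=
          Finset.sum_le_sum (fun j hj =>
            Real.rpow_le_rpow (abs_nonneg _) (hY j (Finset.mem_range.mp hj)) (le_of_lt hk0))
      _ = (n : ℝ) * M ^ k := by simp [mul_comm]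
  have h2 : lpNormK n k Y ≤ ((n : ℝ) * M ^ k) ^ (1 / k) :=
    Real.rpow_le_rpow (Finset.sum_nonneg (fun i _ => Real.rpow_nonneg (abs_nonneg _) _))
      hsum (by positivity)
  refine h2.trans_eq ?_
  rw [Real.mul_rpow (Nat.cast_nonneg n) (Real.rpow_nonneg hM _),
    ← Real.rpow_mul hM, mul_one_div, div_self (ne_of_gt hk0), Real.rpow_one]

/-- if `|x_j| ≤ M` for all `j`, `k ≥ 1`, and `Z` is at least as good as the
all-zero synopsis, i.e. `‖X − W⁻¹(Z)‖_k ≤ ‖X‖_k`, then every coordinate of the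
reconstruction is bounded: `|W⁻¹(Z)_j| ≤ 2·n^(1/k)·M`. -/
theorem reconstruction_coord_bound (m : ℕ) (hm : 1 ≤ m) (X Z : ℕ → ℝ) (M k : ℝ)
    (hk : 1 ≤ k) (hX : ∀ j < 2 ^ m, |X j| ≤ M)
    (hZ : lpNormK (2 ^ m) k (fun j => X j - invW m Z j) ≤ lpNormK (2 ^ m) k X) :
    ∀ j < 2 ^ m, |invW m Z j| ≤ 2 * ((2 ^ m : ℕ) : ℝ) ^ (1 / k) * M := by
  intro j hj
  have hk0 : (0 : ℝ) < k := lt_of_lt_of_le one_pos hk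
  have hM : 0 ≤ M := (abs_nonneg _).trans (hX 0 (Nat.pow_pos two_pos))
  have hn1 : (1 : ℝ) ≤ ((2 ^ m : ℕ) : ℝ) := by
    exact_mod_cast Nat.one_le_two_pow
  have hnk : (1 : ℝ) ≤ ((2 ^ m : ℕ) : ℝ) ^ (1 / k) :=
    Real.one_le_rpow hn1 (by positivity)
  have h1 : |X j - invW m Z j| ≤ ((2 ^ m : ℕ) : ℝ) ^ (1 / k) * M := by
    have := coord_le_lpNormK (2 ^ m) k hk (fun j => X j - invW m Z j) hj
    refine this.trans (hZ.trans ?_)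
    have := lpNormK_le (2 ^ m) k hk X M hM hX
    simpa using this
  have h2 : |X j| ≤ ((2 ^ m : ℕ) : ℝ) ^ (1 / k) * M :=
    (hX j hj).trans (le_mul_of_one_le_left hM hnk)
  calc |invW m Z j| = |X j - (X j - invW m Z j)| := by ring_nf
    _ ≤ |X j| + |X j - invW m Z j| := abs_sub _ _
    _ ≤ ((2 ^ m : ℕ) : ℝ) ^ (1 / k) * M + ((2 ^ m : ℕ) : ℝ) ^ (1 / k) * M := add_le_add h2 h1
    _ = 2 * ((2 ^ m : ℕ) : ℝ) ^ (1 / k) * M := by ring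
end

section
/- Let X ∈ ℝ^n with |x_j| ≤ M for all j, let k ≥ 1 be real, and let π_0,…,π_{n−1} > 0 be weights with ∑_j π_j = n. If Z ∈ ℝ^n satisfies ‖X − W⁻¹(Z)‖_{π,k} ≤ ‖X‖_{π,k} (in particular, if Z minimizes the weighted error over all vectors with at most B nonzero entries), then max_i |Z_i| ≤ 2·n^{1/k}·M / (min_j π_j). -/
/-- The weighted `ℓ_k` norm `‖Y‖_{w,k} = (∑_{j<n} w_j·|Y_j|^k)^(1/k)`. -/
noncomputable def wLpNormK (n : ℕ) (w : ℕ → ℝ) (k : ℝ) (Y : ℕ → ℝ) : ℝ :=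
  (∑ j ∈ Finset.range n, w j * |Y j| ^ k) ^ (1 / k)

lemma haarV_char (m s t i j : ℕ) (hs : s < m) (ht : t < 2 ^ s) (hi : i = 2 ^ s + t) :
    haarV m i j =
      if t * 2 ^ (m - s) ≤ j ∧ j < t * 2 ^ (m - s) + 2 ^ (m - s - 1) then 1
      else if t * 2 ^ (m - s) + 2 ^ (m - s - 1) ≤ j ∧ j < (t + 1) * 2 ^ (m - s) then -1
      else 0 := by
  have hi0 : i ≠ 0 := by subst hi; positivity
  have hlog : Nat.log2 i = s := by
    rw [Nat.log2_eq_log_two]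
    apply Nat.log_eq_of_pow_le_of_lt_pow
    · omega
    · rw [pow_succ]; omega
  have hti : i - 2 ^ Nat.log2 i = t := by rw [hlog]; omega
  simp only [haarV, if_neg hi0, hti, hlog]
  have ht2 : i - 2 ^ s = t := by omega
  rw [ht2]

lemma exists_st (m i : ℕ) (hi : 1 ≤ i) (him : i < 2 ^ m) :
    ∃ s t, s < m ∧ t < 2 ^ s ∧ i = 2 ^ s + t := by
  refine ⟨Nat.log2 i, i - 2 ^ Nat.log2 i, ?_, ?_, ?_⟩
  · have h1 : 2 ^ Nat.log2 i ≤ i := by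
      rw [Nat.log2_eq_log_two]; exact Nat.pow_log_le_self 2 (by omega)
    have h2 : 2 ^ Nat.log2 i < 2 ^ m := lt_of_le_of_lt h1 him
    exact (Nat.pow_lt_pow_iff_right (by norm_num)).mp h2
  · have h2 : i < 2 ^ (Nat.log2 i + 1) := by
      rw [Nat.log2_eq_log_two]; exact Nat.lt_pow_succ_log_self (by norm_num) i
    have h1 : 2 ^ Nat.log2 i ≤ i := by
      rw [Nat.log2_eq_log_two]; exact Nat.pow_log_le_self 2 (by omega)
    rw [pow_succ] at h2; omega
  · have h1 : 2 ^ Nat.log2 i ≤ i := by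
      rw [Nat.log2_eq_log_two]; exact Nat.pow_log_le_self 2 (by omega)
    omega

lemma two_pow_split (m s : ℕ) (hs : s < m) : 2 ^ (m - s) = 2 ^ (m - s - 1) + 2 ^ (m - s - 1) := by
  obtain ⟨u, hu⟩ : ∃ u, m - s = u + 1 := ⟨m - s - 1, by omega⟩
  rw [hu]
  simp only [Nat.add_sub_cancel, pow_succ]
  ring

lemma haarV_support (m s t j : ℕ) (hs : s < m) (ht : t < 2 ^ s)
    (h : haarV m (2 ^ s + t) j ≠ 0) :
    t * 2 ^ (m - s) ≤ j ∧ j < (t + 1) * 2 ^ (m - s) := by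
  rw [haarV_char m s t _ j hs ht rfl] at h
  have hsp := two_pow_split m s hs
  have hE : (t + 1) * 2 ^ (m - s)
      = t * 2 ^ (m - s) + 2 ^ (m - s - 1) + 2 ^ (m - s - 1) := by rw [hsp]; ring
  split_ifs at h with h1 h2
  · exact ⟨h1.1, by omega⟩
  · exact ⟨le_trans (Nat.le_add_right _ _) h2.1, h2.2⟩
  · simp at h

lemma haarV_block_sum (m s t : ℕ) (hs : s < m) (ht : t < 2 ^ s) :
    ∑ j ∈ Finset.Ico (t * 2 ^ (m - s)) ((t + 1) * 2 ^ (m - s)), haarV m (2 ^ s + t) j = 0 := by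
  have hsp := two_pow_split m s hs
  have hE : (t + 1) * 2 ^ (m - s)
      = t * 2 ^ (m - s) + 2 ^ (m - s - 1) + 2 ^ (m - s - 1) := by rw [hsp]; ring
  rw [hE, ← Finset.sum_Ico_consecutive (fun j => haarV m (2 ^ s + t) j)
    (Nat.le_add_right _ _) (Nat.le_add_right _ _)]
  have e1 : ∀ j ∈ Finset.Ico (t * 2 ^ (m - s)) (t * 2 ^ (m - s) + 2 ^ (m - s - 1)),
      haarV m (2 ^ s + t) j = 1 := by
    intro j hj
    rw [Finset.mem_Ico] at hj
    rw [haarV_char m s t _ j hs ht rfl, if_pos ⟨hj.1, hj.2⟩]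
  have e2 : ∀ j ∈ Finset.Ico (t * 2 ^ (m - s) + 2 ^ (m - s - 1))
      (t * 2 ^ (m - s) + 2 ^ (m - s - 1) + 2 ^ (m - s - 1)),
      haarV m (2 ^ s + t) j = -1 := by
    intro j hj
    rw [Finset.mem_Ico] at hj
    rw [haarV_char m s t _ j hs ht rfl, if_neg (by omega), if_pos ⟨hj.1, by omega⟩]
  rw [Finset.sum_congr rfl e1, Finset.sum_congr rfl e2, Finset.sum_const, Finset.sum_const,
    Nat.card_Ico, Nat.card_Ico, Nat.add_sub_cancel_left, Nat.add_sub_cancel_left]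
  simp

lemma dvd_step {d x y : ℕ} (hx : d ∣ x) (hy : d ∣ y) (h : x < y) : x + d ≤ y := by
  obtain ⟨u, rfl⟩ := hx
  obtain ⟨v, rfl⟩ := hy
  rcases Nat.eq_zero_or_pos d with rfl | hd
  · simp at h
  have huv : u < v := lt_of_mul_lt_mul_left h (Nat.zero_le d)
  calc d * u + d = d * (u + 1) := by ring
    _ ≤ d * v := Nat.mul_le_mul_left d huv

/-- `V_{2^s+t}` is constant on any dyadic block at a deeper level. -/
lemma haarV_const_on (m s t s' t' : ℕ) (hs' : s' < m) (hss : s < s') (ht : t < 2 ^ s)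
    (ht' : t' < 2 ^ s') :
    ∃ c : ℝ, ∀ j ∈ Finset.Ico (t' * 2 ^ (m - s')) ((t' + 1) * 2 ^ (m - s')),
      haarV m (2 ^ s + t) j = c := by
  have hs : s < m := lt_trans hss hs'
  have hsp := two_pow_split m s hs
  have hE : (t + 1) * 2 ^ (m - s)
      = t * 2 ^ (m - s) + 2 ^ (m - s - 1) + 2 ^ (m - s - 1) := by rw [hsp]; ring
  have hE' : (t' + 1) * 2 ^ (m - s') = t' * 2 ^ (m - s') + 2 ^ (m - s') := by ring
  set d := 2 ^ (m - s') with hd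
  set a' := t' * 2 ^ (m - s') with ha'
  set a := t * 2 ^ (m - s) with ha
  set h := 2 ^ (m - s - 1) with hh
  have hdh : d ∣ h := by
    rw [hd, hh]; exact pow_dvd_pow 2 (by omega)
  have hda : d ∣ a := by
    refine Dvd.dvd.mul_left ?_ t
    rw [hd]; exact pow_dvd_pow 2 (by omega)
  have hda' : d ∣ a' := Dvd.dvd.mul_left dvd_rfl t'
  -- boundaries a, a + h, a + 2h are multiples of d
  have hb1 : d ∣ a + h := Nat.dvd_add hda hdh
  have hb2 : d ∣ a + h + h := Nat.dvd_add hb1 hdh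
  rcases lt_or_ge a' a with hc1 | hc1
  · -- a' + d ≤ a : block left of support, V = 0
    have hstep : a' + d ≤ a := dvd_step hda' hda hc1
    refine ⟨0, fun j hj => ?_⟩
    rw [Finset.mem_Ico, hE'] at hj
    rw [haarV_char m s t _ j hs ht rfl, if_neg (by omega), if_neg (by omega)]
  rcases lt_or_ge a' (a + h) with hc2 | hc2
  · -- a ≤ a' and a' + d ≤ a + h : V = 1
    have hstep : a' + d ≤ a + h := dvd_step hda' hb1 hc2
    refine ⟨1, fun j hj => ?_⟩
    rw [Finset.mem_Ico, hE'] at hj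
    rw [haarV_char m s t _ j hs ht rfl, if_pos ⟨by omega, by omega⟩]
  rcases lt_or_ge a' (a + h + h) with hc3 | hc3
  · -- a + h ≤ a' and a' + d ≤ a + 2h : V = -1
    have hstep : a' + d ≤ a + h + h := dvd_step hda' hb2 hc3
    refine ⟨-1, fun j hj => ?_⟩
    rw [Finset.mem_Ico, hE'] at hj
    rw [haarV_char m s t _ j hs ht rfl, if_neg (by omega), if_pos ⟨by omega, by omega⟩]
  · -- a + 2h ≤ a' : right of support, V = 0
    refine ⟨0, fun j hj => ?_⟩
    rw [Finset.mem_Ico, hE'] at hj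
    rw [haarV_char m s t _ j hs ht rfl, if_neg (by omega), if_neg (by omega)]

lemma haarV_zero (m j : ℕ) : haarV m 0 j = 1 := by simp [haarV]

lemma block_subset_range (m s t : ℕ) (hs : s < m) (ht : t < 2 ^ s) :
    Finset.Ico (t * 2 ^ (m - s)) ((t + 1) * 2 ^ (m - s)) ⊆ Finset.range (2 ^ m) := by
  intro j hj
  rw [Finset.mem_Ico] at hj
  rw [Finset.mem_range]
  have h1 : (t + 1) * 2 ^ (m - s) ≤ 2 ^ s * 2 ^ (m - s) :=
    Nat.mul_le_mul_right _ (by omega)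
  have h2 : 2 ^ s * 2 ^ (m - s) = 2 ^ m := by
    rw [← pow_add]; congr 1; omega
  omega

lemma haarV_range_sum (m s t : ℕ) (hs : s < m) (ht : t < 2 ^ s) :
    ∑ j ∈ Finset.range (2 ^ m), haarV m (2 ^ s + t) j = 0 := by
  rw [← Finset.sum_subset (block_subset_range m s t hs ht) (fun j _ hj => by
    by_contra hne
    exact hj (Finset.mem_Ico.mpr (haarV_support m s t j hs ht hne)))]
  exact haarV_block_sum m s t hs ht

/-- orthogonality when the first index has strictly smaller level. -/
lemma haarV_ortho_lt (m s t s' t' : ℕ) (hs' : s' < m) (hss : s < s') (ht : t < 2 ^ s)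
    (ht' : t' < 2 ^ s') :
    ∑ j ∈ Finset.range (2 ^ m), haarV m (2 ^ s + t) j * haarV m (2 ^ s' + t') j = 0 := by
  obtain ⟨c, hc⟩ := haarV_const_on m s t s' t' hs' hss ht ht'
  rw [← Finset.sum_subset (block_subset_range m s' t' hs' ht') (fun j _ hj => by
    by_contra hne
    exact hj (Finset.mem_Ico.mpr (haarV_support m s' t' j hs' ht' (fun h0 => hne (by rw [h0, mul_zero])))))]
  calc ∑ j ∈ Finset.Ico (t' * 2 ^ (m - s')) ((t' + 1) * 2 ^ (m - s')),
        haarV m (2 ^ s + t) j * haarV m (2 ^ s' + t') j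
      = ∑ j ∈ Finset.Ico (t' * 2 ^ (m - s')) ((t' + 1) * 2 ^ (m - s')),
        c * haarV m (2 ^ s' + t') j := by
        refine Finset.sum_congr rfl fun j hj => by rw [hc j hj]
    _ = c * ∑ j ∈ Finset.Ico (t' * 2 ^ (m - s')) ((t' + 1) * 2 ^ (m - s')),
        haarV m (2 ^ s' + t') j := by rw [Finset.mul_sum]
    _ = 0 := by rw [haarV_block_sum m s' t' hs' ht', mul_zero]

lemma haarV_orthogonal (m i i' : ℕ) (hi : i < 2 ^ m) (hi' : i' < 2 ^ m) (hne : i ≠ i') :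
    ∑ j ∈ Finset.range (2 ^ m), haarV m i j * haarV m i' j = 0 := by
  rcases Nat.eq_zero_or_pos i with rfl | hpos
  · rcases Nat.eq_zero_or_pos i' with rfl | hpos'
    · exact absurd rfl hne
    · obtain ⟨s', t', hs', ht', rfl⟩ := exists_st m i' hpos' hi'
      simp only [haarV_zero, one_mul]
      exact haarV_range_sum m s' t' hs' ht'
  rcases Nat.eq_zero_or_pos i' with rfl | hpos'
  · obtain ⟨s, t, hs, ht, rfl⟩ := exists_st m i hpos hi
    simp only [haarV_zero, mul_one]
    exact haarV_range_sum m s t hs ht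
  obtain ⟨s, t, hs, ht, rfl⟩ := exists_st m i hpos hi
  obtain ⟨s', t', hs', ht', rfl⟩ := exists_st m i' hpos' hi'
  rcases lt_trichotomy s s' with hss | hss | hss
  · exact haarV_ortho_lt m s t s' t' hs' hss ht ht'
  · -- same level, different offsets: disjoint supports
    subst hss
    have htt : t ≠ t' := by intro h; exact hne (by rw [h])
    refine Finset.sum_eq_zero fun j _ => ?_
    by_contra h0
    have h1 : haarV m (2 ^ s + t) j ≠ 0 := fun h => h0 (by rw [h, zero_mul])
    have h2 : haarV m (2 ^ s + t') j ≠ 0 := fun h => h0 (by rw [h, mul_zero])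
    have hs1 := haarV_support m s t j hs ht h1
    have hs2 := haarV_support m s t' j hs ht' h2
    rcases Nat.lt_or_ge t t' with hlt | hge
    · have : (t + 1) * 2 ^ (m - s) ≤ t' * 2 ^ (m - s) := Nat.mul_le_mul_right _ (by omega)
      omega
    · have hlt : t' < t := by omega
      have : (t' + 1) * 2 ^ (m - s) ≤ t * 2 ^ (m - s) := Nat.mul_le_mul_right _ (by omega)
      omega
  · have := haarV_ortho_lt m s' t' s t hs hss ht' ht
    calc ∑ j ∈ Finset.range (2 ^ m), haarV m (2 ^ s + t) j * haarV m (2 ^ s' + t') j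
        = ∑ j ∈ Finset.range (2 ^ m), haarV m (2 ^ s' + t') j * haarV m (2 ^ s + t) j := by
          refine Finset.sum_congr rfl fun j _ => mul_comm _ _
      _ = 0 := this

lemma haarV_abs_eq_sq (m i j : ℕ) : |haarV m i j| = haarV m i j ^ 2 := by
  simp only [haarV]
  split_ifs <;> norm_num

lemma haarV_sq_sum_pos (m i : ℕ) (hi : i < 2 ^ m) :
    0 < ∑ j ∈ Finset.range (2 ^ m), haarV m i j ^ 2 := by
  have hmpos : 0 < 2 ^ m := Nat.pow_pos (by norm_num)
  refine Finset.sum_pos' (fun j _ => sq_nonneg _) ?_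
  rcases Nat.eq_zero_or_pos i with rfl | hpos
  · exact ⟨0, Finset.mem_range.mpr hmpos, by rw [haarV_zero]; norm_num⟩
  obtain ⟨s, t, hs, ht, rfl⟩ := exists_st m i hpos hi
  refine ⟨t * 2 ^ (m - s), ?_, ?_⟩
  · apply block_subset_range m s t hs ht
    rw [Finset.mem_Ico]
    have hp : 0 < 2 ^ (m - s) := Nat.pow_pos (by norm_num)
    exact ⟨le_refl _, by nlinarith⟩
  · rw [haarV_char m s t _ _ hs ht rfl, if_pos ⟨le_refl _, by
      have : 0 < 2 ^ (m - s - 1) := Nat.pow_pos (by norm_num)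
      omega⟩]
    norm_num

lemma invW_inner (m : ℕ) (Z : ℕ → ℝ) (i : ℕ) (hi : i < 2 ^ m) :
    ∑ j ∈ Finset.range (2 ^ m), invW m Z j * haarV m i j
      = Z i * ∑ j ∈ Finset.range (2 ^ m), haarV m i j ^ 2 := by
  unfold invW
  simp_rw [Finset.sum_mul]
  rw [Finset.sum_comm]
  have : ∀ i' ∈ Finset.range (2 ^ m),
      ∑ j ∈ Finset.range (2 ^ m), Z i' * haarV m i' j * haarV m i j
      = if i' = i then Z i * ∑ j ∈ Finset.range (2 ^ m), haarV m i j ^ 2 else 0 := by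
    intro i' hi'
    rcases eq_or_ne i' i with rfl | hne
    · rw [if_pos rfl, Finset.mul_sum]
      refine Finset.sum_congr rfl fun j _ => by ring
    · rw [if_neg hne]
      have : ∑ j ∈ Finset.range (2 ^ m), Z i' * (haarV m i' j * haarV m i j)
          = Z i' * ∑ j ∈ Finset.range (2 ^ m), haarV m i' j * haarV m i j := by
        rw [Finset.mul_sum]
      calc ∑ j ∈ Finset.range (2 ^ m), Z i' * haarV m i' j * haarV m i j
          = Z i' * ∑ j ∈ Finset.range (2 ^ m), haarV m i' j * haarV m i j := by
            rw [Finset.mul_sum]; exact Finset.sum_congr rfl fun j _ => by ring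
        _ = 0 := by
            rw [haarV_orthogonal m i' i (Finset.mem_range.mp hi') hi hne, mul_zero]
  rw [Finset.sum_congr rfl this, Finset.sum_ite_eq' (Finset.range (2 ^ m)) i
    (fun _ => Z i * ∑ j ∈ Finset.range (2 ^ m), haarV m i j ^ 2)]
  rw [if_pos (Finset.mem_range.mpr hi)]

lemma coeff_bound (m : ℕ) (Z : ℕ → ℝ) (C : ℝ) (i : ℕ) (hi : i < 2 ^ m)
    (hC : ∀ j < 2 ^ m, |invW m Z j| ≤ C) : |Z i| ≤ C := by
  have hN := haarV_sq_sum_pos m i hi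
  have hinner := invW_inner m Z i hi
  have hle : |Z i| * ∑ j ∈ Finset.range (2 ^ m), haarV m i j ^ 2
      ≤ C * ∑ j ∈ Finset.range (2 ^ m), haarV m i j ^ 2 := by
    calc |Z i| * ∑ j ∈ Finset.range (2 ^ m), haarV m i j ^ 2
        = |∑ j ∈ Finset.range (2 ^ m), invW m Z j * haarV m i j| := by
          rw [hinner, abs_mul]
          congr 1
          exact (abs_of_pos hN).symm
      _ ≤ ∑ j ∈ Finset.range (2 ^ m), |invW m Z j * haarV m i j| :=
          Finset.abs_sum_le_sum_abs _ _
      _ = ∑ j ∈ Finset.range (2 ^ m), |invW m Z j| * haarV m i j ^ 2 := by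
          refine Finset.sum_congr rfl fun j _ => ?_
          rw [abs_mul, haarV_abs_eq_sq]
      _ ≤ ∑ j ∈ Finset.range (2 ^ m), C * haarV m i j ^ 2 := by
          refine Finset.sum_le_sum fun j hj => ?_
          exact mul_le_mul_of_nonneg_right (hC j (Finset.mem_range.mp hj)) (sq_nonneg _)
      _ = C * ∑ j ∈ Finset.range (2 ^ m), haarV m i j ^ 2 := by rw [Finset.mul_sum]
  exact le_of_mul_le_mul_right hle hN

/-- with weights `w_j > 0`, `∑_{j<n} w_j = n`, data bounded by `M`, and
`k ≥ 1`: if `Z` satisfies `‖X − W⁻¹(Z)‖_{w,k} ≤ ‖X‖_{w,k}` (as any minimizer over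
vectors with at most `B` nonzero entries does), then
`|Z_i| ≤ 2·n^(1/k)·M / (min_j w_j)` for every `i < n = 2^m`. -/
theorem weighted_synopsis_coeff_bound (m : ℕ) (hm : 1 ≤ m) (X Z w : ℕ → ℝ) (M k : ℝ)
    (hk : 1 ≤ k) (hw : ∀ j < 2 ^ m, 0 < w j)
    (hwsum : ∑ j ∈ Finset.range (2 ^ m), w j = (2 ^ m : ℕ))
    (hX : ∀ j < 2 ^ m, |X j| ≤ M)
    (hZ : wLpNormK (2 ^ m) w k (fun j => X j - invW m Z j) ≤ wLpNormK (2 ^ m) w k X) :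
    ∀ i < 2 ^ m, |Z i| ≤ 2 * ((2 ^ m : ℕ) : ℝ) ^ (1 / k) * M /
      ((Finset.range (2 ^ m)).inf'
        (Finset.nonempty_range_iff.mpr (by positivity)) w) := by
  intro i hi
  have hnpos : (0:ℕ) < 2 ^ m := Nat.pow_pos (by norm_num)
  have hne : (Finset.range (2 ^ m)).Nonempty := Finset.nonempty_range_iff.mpr (by positivity)
  show |Z i| ≤ 2 * ((2 ^ m : ℕ) : ℝ) ^ (1 / k) * M / ((Finset.range (2 ^ m)).inf' hne w)
  set wmin : ℝ := (Finset.range (2 ^ m)).inf' hne w with hwmin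
  have hk0 : (0:ℝ) < k := lt_of_lt_of_le one_pos hk
  have hik : (0:ℝ) < 1 / k := by positivity
  have hik1 : 1 / k ≤ 1 := by
    rw [div_le_one hk0]; exact hk
  have hkik : k * (1 / k) = 1 := mul_one_div_cancel hk0.ne'
  have hwmin_pos : 0 < wmin := by
    rw [hwmin, Finset.lt_inf'_iff]
    exact fun j hj => hw j (Finset.mem_range.mp hj)
  have hwmin_le : ∀ j ∈ Finset.range (2 ^ m), wmin ≤ w j := fun j hj => Finset.inf'_le w hj
  have hnR : (0:ℝ) < ((2 ^ m : ℕ) : ℝ) := by positivity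
  have hwmin_one : wmin ≤ 1 := by
    have h1 : ∑ j ∈ Finset.range (2 ^ m), wmin ≤ ∑ j ∈ Finset.range (2 ^ m), w j :=
      Finset.sum_le_sum hwmin_le
    rw [Finset.sum_const, hwsum, Finset.card_range, nsmul_eq_mul] at h1
    nlinarith
  have hM0 : 0 ≤ M := le_trans (abs_nonneg _) (hX 0 hnpos)
  -- the approximation error
  set Y : ℕ → ℝ := fun j => X j - invW m Z j with hY
  set S : ℝ := ∑ j ∈ Finset.range (2 ^ m), w j * |Y j| ^ k with hS
  set T : ℝ := ∑ j ∈ Finset.range (2 ^ m), w j * |X j| ^ k with hT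
  have hS0 : 0 ≤ S :=
    Finset.sum_nonneg fun j hj => mul_nonneg (hw j (Finset.mem_range.mp hj)).le
      (Real.rpow_nonneg (abs_nonneg _) k)
  have hT0 : 0 ≤ T :=
    Finset.sum_nonneg fun j hj => mul_nonneg (hw j (Finset.mem_range.mp hj)).le
      (Real.rpow_nonneg (abs_nonneg _) k)
  have hST : S ≤ T := by
    have := hZ
    simp only [wLpNormK] at this
    exact (Real.rpow_le_rpow_iff hS0 hT0 hik).mp this
  have hTn : T ≤ ((2 ^ m : ℕ) : ℝ) * M ^ k := by
    rw [hT]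
    calc ∑ j ∈ Finset.range (2 ^ m), w j * |X j| ^ k
        ≤ ∑ j ∈ Finset.range (2 ^ m), w j * M ^ k := by
          refine Finset.sum_le_sum fun j hj => ?_
          exact mul_le_mul_of_nonneg_left
            (Real.rpow_le_rpow (abs_nonneg _) (hX j (Finset.mem_range.mp hj)) hk0.le)
            (hw j (Finset.mem_range.mp hj)).le
      _ = (∑ j ∈ Finset.range (2 ^ m), w j) * M ^ k := by rw [Finset.sum_mul]
      _ = ((2 ^ m : ℕ) : ℝ) * M ^ k := by rw [hwsum]
  have hMk : (M ^ k) ^ (1 / k) = M := by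
    rw [← Real.rpow_mul hM0, hkik, Real.rpow_one]
  have hYbound : ∀ j < 2 ^ m, |Y j| ≤ ((2 ^ m : ℕ) : ℝ) ^ (1 / k) * M / wmin ^ (1 / k) := by
    intro j hj
    have hmem := Finset.mem_range.mpr hj
    have h1 : w j * |Y j| ^ k ≤ S := by
      rw [hS]
      refine Finset.single_le_sum (fun j' hj' => mul_nonneg
        (hw j' (Finset.mem_range.mp hj')).le (Real.rpow_nonneg (abs_nonneg _) k)) hmem
    have h2 : wmin * |Y j| ^ k ≤ ((2 ^ m : ℕ) : ℝ) * M ^ k := by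
      calc wmin * |Y j| ^ k ≤ w j * |Y j| ^ k :=
            mul_le_mul_of_nonneg_right (hwmin_le j hmem) (Real.rpow_nonneg (abs_nonneg _) k)
        _ ≤ S := h1
        _ ≤ T := hST
        _ ≤ _ := hTn
    have h3 : |Y j| ^ k ≤ ((2 ^ m : ℕ) : ℝ) * M ^ k / wmin := by
      rw [le_div_iff₀ hwmin_pos]; linarith [mul_comm wmin (|Y j| ^ k)]
    calc |Y j| = (|Y j| ^ k) ^ (1 / k) := by
          rw [← Real.rpow_mul (abs_nonneg _), hkik, Real.rpow_one]
      _ ≤ (((2 ^ m : ℕ) : ℝ) * M ^ k / wmin) ^ (1 / k) :=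
          Real.rpow_le_rpow (Real.rpow_nonneg (abs_nonneg _) k) h3 hik.le
      _ = ((2 ^ m : ℕ) : ℝ) ^ (1 / k) * M / wmin ^ (1 / k) := by
          rw [Real.div_rpow (by positivity) hwmin_pos.le,
            Real.mul_rpow hnR.le (Real.rpow_nonneg hM0 k), hMk]
  -- bound on invW
  have hC : ∀ j < 2 ^ m, |invW m Z j| ≤ M + ((2 ^ m : ℕ) : ℝ) ^ (1 / k) * M / wmin ^ (1 / k) := by
    intro j hj
    have : invW m Z j = X j - Y j := by rw [hY]; ring
    rw [this]
    calc |X j - Y j| ≤ |X j| + |Y j| := abs_sub _ _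
      _ ≤ M + ((2 ^ m : ℕ) : ℝ) ^ (1 / k) * M / wmin ^ (1 / k) :=
          add_le_add (hX j hj) (hYbound j hj)
  have hZi := coeff_bound m Z _ i hi hC
  -- final comparison
  have hn1 : 1 ≤ ((2 ^ m : ℕ) : ℝ) ^ (1 / k) := by
    have hcast : (1:ℝ) ≤ ((2 ^ m : ℕ) : ℝ) := by exact_mod_cast Nat.one_le_two_pow
    calc (1:ℝ) = 1 ^ (1/k) := by rw [Real.one_rpow]
      _ ≤ ((2 ^ m : ℕ) : ℝ) ^ (1 / k) := Real.rpow_le_rpow (by norm_num) hcast hik.le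
  have hp1 : M ≤ ((2 ^ m : ℕ) : ℝ) ^ (1 / k) * M / wmin := by
    rw [le_div_iff₀ hwmin_pos]
    nlinarith
  have hp2 : ((2 ^ m : ℕ) : ℝ) ^ (1 / k) * M / wmin ^ (1 / k)
      ≤ ((2 ^ m : ℕ) : ℝ) ^ (1 / k) * M / wmin := by
    apply div_le_div_of_nonneg_left (by positivity) hwmin_pos
    calc wmin = wmin ^ (1:ℝ) := by rw [Real.rpow_one]
      _ ≤ wmin ^ (1 / k) := Real.rpow_le_rpow_of_exponent_ge hwmin_pos hwmin_one hik1
  have : |Z i| ≤ ((2 ^ m : ℕ) : ℝ) ^ (1 / k) * M / wmin + ((2 ^ m : ℕ) : ℝ) ^ (1 / k) * M / wmin := by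
    linarith
  calc |Z i| ≤ _ := this
    _ = 2 * ((2 ^ m : ℕ) : ℝ) ^ (1 / k) * M / wmin := by ring
end

section
/- Let m ≥ b ≥ 1 be integers, n = 2^m and B = 2^b. Then the sum bounding the running time of the improved restricted-wavelet dynamic program satisfies ∑_{t=1}^{m} (n/2^t) · (2n/2^t) · min(B², 4^t) ≤ 2·n²·log₂ B + n². -/
lemma geom4 (m : ℕ) : 2 * ∑ j ∈ Finset.range m, 4 ^ j ≤ 4 ^ m := by
  induction m with
  | zero => simp
  | succ n ih =>
    rw [Finset.sum_range_succ, Nat.mul_add, pow_succ]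
    omega

/-- with `n = 2^m`, `B = 2^b`, `1 ≤ b ≤ m`, the level-by-level work of the
improved restricted-wavelet dynamic program satisfies
`∑_{t=1}^{m} (n/2^t)·(2n/2^t)·min(B², 4^t) ≤ 2·n²·log₂ B + n²`. -/
theorem restricted_dp_work_bound (m b : ℕ) (hb : 1 ≤ b) (hbm : b ≤ m) :
    ∑ t ∈ Finset.Icc 1 m, (2 ^ m / 2 ^ t) * (2 * 2 ^ m / 2 ^ t) * min ((2 ^ b) ^ 2) (4 ^ t)
      ≤ 2 * (2 ^ m) ^ 2 * b + (2 ^ m) ^ 2 := by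
  have h4 : (4:ℕ) = 2 ^ 2 := rfl
  have key : ∀ t ∈ Finset.Icc 1 m,
      (2 ^ m / 2 ^ t) * (2 * 2 ^ m / 2 ^ t) * min ((2 ^ b) ^ 2) (4 ^ t)
        = 2 * 4 ^ (m - t) * min (4 ^ b) (4 ^ t) := by
    intro t ht
    simp only [Finset.mem_Icc] at ht
    have h1 : (2:ℕ) ^ m / 2 ^ t = 2 ^ (m - t) := Nat.pow_div ht.2 (by norm_num)
    have h2 : 2 * (2:ℕ) ^ m = 2 ^ (m + 1) := by rw [pow_succ]; ring
    have h3 : (2:ℕ) ^ (m + 1) / 2 ^ t = 2 ^ (m + 1 - t) := Nat.pow_div (by omega) (by norm_num)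
    have h5 : m + 1 - t = (m - t) + 1 := by omega
    have h6 : ((2:ℕ) ^ b) ^ 2 = 4 ^ b := by rw [h4, ← pow_mul, ← pow_mul, mul_comm]
    rw [h1, h2, h3, h5, h6]
    congr 1
    rw [pow_succ, ← mul_assoc, ← pow_add, h4, ← pow_mul]
    ring
  rw [Finset.sum_congr rfl key]
  have hsplit : Finset.Icc 1 m = Finset.Ioc 0 m := by rw [← Finset.Icc_add_one_left_eq_Ioc]; rfl
  rw [hsplit, ← Finset.sum_Ioc_consecutive _ (Nat.zero_le b) hbm]
  have hS1 : ∑ t ∈ Finset.Ioc 0 b, 2 * 4 ^ (m - t) * min (4 ^ b) (4 ^ t)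
      ≤ b * (2 * 4 ^ m) := by
    have := Finset.sum_le_card_nsmul (Finset.Ioc 0 b)
      (fun t => 2 * 4 ^ (m - t) * min (4 ^ b) (4 ^ t)) (2 * 4 ^ m) ?_
    · simpa [Nat.card_Ioc, smul_eq_mul] using this
    · intro t ht
      simp only [Finset.mem_Ioc] at ht
      calc 2 * 4 ^ (m - t) * min (4 ^ b) (4 ^ t)
          ≤ 2 * 4 ^ (m - t) * 4 ^ t := by
            exact Nat.mul_le_mul_left _ (min_le_right _ _)
        _ = 2 * 4 ^ m := by
            rw [mul_assoc, ← pow_add]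
            congr 2
            omega
  have hS2 : ∑ t ∈ Finset.Ioc b m, 2 * 4 ^ (m - t) * min (4 ^ b) (4 ^ t)
      ≤ 4 ^ m := by
    have heq : ∀ t ∈ Finset.Ioc b m,
        2 * 4 ^ (m - t) * min (4 ^ b) (4 ^ t) = 2 * 4 ^ (m - t + b) := by
      intro t ht
      simp only [Finset.mem_Ioc] at ht
      rw [min_eq_left (Nat.pow_le_pow_right (by norm_num) (le_of_lt ht.1)),
        mul_assoc, ← pow_add]
    rw [Finset.sum_congr rfl heq]
    have hinj : ∀ x ∈ Finset.Ioc b m, ∀ y ∈ Finset.Ioc b m,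
        m - x + b = m - y + b → x = y := by
      intro t1 h1 t2 h2 h
      simp only [Finset.mem_Ioc] at h1 h2
      omega
    have himg : ∑ j ∈ (Finset.Ioc b m).image (fun t => m - t + b), 2 * 4 ^ j
        = ∑ t ∈ Finset.Ioc b m, 2 * 4 ^ (m - t + b) := Finset.sum_image hinj
    rw [← himg]
    have hsub : (Finset.Ioc b m).image (fun t => m - t + b) ⊆ Finset.range m := by
      intro j hj
      simp only [Finset.mem_image, Finset.mem_Ioc] at hj
      obtain ⟨t, ⟨h1, h2⟩, rfl⟩ := hj
      simp only [Finset.mem_range]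
      omega
    calc ∑ j ∈ (Finset.Ioc b m).image (fun t => m - t + b), 2 * 4 ^ j
        ≤ ∑ j ∈ Finset.range m, 2 * 4 ^ j := Finset.sum_le_sum_of_subset hsub
      _ = 2 * ∑ j ∈ Finset.range m, 4 ^ j := by rw [Finset.mul_sum]
      _ ≤ 4 ^ m := geom4 m
  have hpow : ((2:ℕ) ^ m) ^ 2 = 4 ^ m := by rw [h4, ← pow_mul, ← pow_mul, mul_comm]
  calc _ ≤ b * (2 * 4 ^ m) + 4 ^ m := Nat.add_le_add hS1 hS2
    _ = 2 * 4 ^ m * b + 4 ^ m := by ring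
    _ = 2 * ((2:ℕ) ^ m) ^ 2 * b + ((2:ℕ) ^ m) ^ 2 := by rw [hpow]
end

section
/- Let m ≥ b ≥ 1 be integers, n = 2^m and B = 2^b. Then ∑_{t=1}^{m} (n/2^t) · (2n/2^t) · min(B·log₂ B, t·2^t) ≤ 5·n². -/
lemma aux_geo (m : ℕ) : ∑ t ∈ Finset.Icc 1 m, t * 2 ^ (m - t) + (m + 2) = 2 ^ (m + 1) := by
  induction m with
  | zero => simp
  | succ n ih =>
    rw [Finset.sum_Icc_succ_top (by omega : 1 ≤ n + 1)]
    have h : ∑ t ∈ Finset.Icc 1 n, t * 2 ^ (n + 1 - t)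
        = 2 * ∑ t ∈ Finset.Icc 1 n, t * 2 ^ (n - t) := by
      rw [Finset.mul_sum]
      refine Finset.sum_congr rfl fun t ht => ?_
      have h2 : t ≤ n := (Finset.mem_Icc.mp ht).2
      have : n + 1 - t = (n - t) + 1 := by omega
      rw [this, pow_succ]; ring
    have hp : (2:ℕ) ^ (n + 1 + 1) = 2 * 2 ^ (n + 1) := by rw [pow_succ]; ring
    simp only [Nat.sub_self, pow_zero, mul_one] at *
    omega

/-- with `n = 2^m`, `B = 2^b`, `1 ≤ b ≤ m`, the level-by-level work of the
`ℓ_∞` restricted-wavelet dynamic program satisfies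
`∑_{t=1}^{m} (n/2^t)·(2n/2^t)·min(B·log₂ B, t·2^t) ≤ 5·n²`. -/
theorem restricted_dp_linf_work_bound (m b : ℕ) (hb : 1 ≤ b) (hbm : b ≤ m) :
    ∑ t ∈ Finset.Icc 1 m,
        (2 ^ m / 2 ^ t) * (2 * 2 ^ m / 2 ^ t) * min (2 ^ b * b) (t * 2 ^ t)
      ≤ 5 * (2 ^ m) ^ 2 := by
  calc ∑ t ∈ Finset.Icc 1 m,
        (2 ^ m / 2 ^ t) * (2 * 2 ^ m / 2 ^ t) * min (2 ^ b * b) (t * 2 ^ t)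
      ≤ ∑ t ∈ Finset.Icc 1 m, 2 ^ (m + 1) * (t * 2 ^ (m - t)) := by
        refine Finset.sum_le_sum fun t ht => ?_
        obtain ⟨ht1, ht2⟩ := Finset.mem_Icc.mp ht
        have e1 : 2 ^ m / 2 ^ t = 2 ^ (m - t) := Nat.pow_div ht2 two_pos
        have e2 : 2 * 2 ^ m / 2 ^ t = 2 ^ (m + 1 - t) := by
          have : 2 * 2 ^ m = 2 ^ (m + 1) := by rw [pow_succ]; ring
          rw [this, Nat.pow_div (by omega) two_pos]
        rw [e1, e2]
        calc 2 ^ (m - t) * 2 ^ (m + 1 - t) * min (2 ^ b * b) (t * 2 ^ t)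
            ≤ 2 ^ (m - t) * 2 ^ (m + 1 - t) * (t * 2 ^ t) :=
              Nat.mul_le_mul_left _ (min_le_right _ _)
          _ = 2 ^ (m + 1) * (t * 2 ^ (m - t)) := by
              have e : (2:ℕ) ^ (m + 1 - t) * 2 ^ t = 2 ^ (m + 1) := by
                rw [← pow_add]; congr 1; omega
              rw [← e]; ring
    _ = 2 ^ (m + 1) * ∑ t ∈ Finset.Icc 1 m, t * 2 ^ (m - t) := by rw [Finset.mul_sum]
    _ ≤ 2 ^ (m + 1) * 2 ^ (m + 1) := by
        have := aux_geo m
        exact Nat.mul_le_mul_left _ (by omega)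
    _ ≤ 5 * (2 ^ m) ^ 2 := by
        have : (2:ℕ) ^ (m + 1) * 2 ^ (m + 1) = 4 * (2 ^ m) ^ 2 := by
          rw [pow_succ]; ring
        rw [this]
        exact Nat.mul_le_mul_right _ (by norm_num)
end
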